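/- For every N≥0 the function V^N = 𝕄^N h is concave on S^M, and the pointwise limit V₀(π)=lim_{N→∞}(𝕄^N h)(π) is concave on S^M. -/

import Mathlib

open MeasureTheory Finset Filter
open scoped ENNReal

noncomputable section

/-- The analytic data of the change-diagnosis problem: a σ-finite reference measure `m`
on the observation space, probability densities `f₀, …, f_M`, the geometric parameter
`p ∈ (0,1)`, the prior `ν` on the change index, the delay cost `c > 0` and the
terminal-decision costs `a_{ij}` (with `a_{ii} = 0`). -/
structure DiagSetup (E : Type*) [MeasurableSpace E] (M : ℕ) : Type _ where
  /-- σ-finite reference measure -/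
  m : Measure E
  hm : SigmaFinite m
  /-- `f 0` is the pre-change density, `f i.succ` the post-change densities -/
  f : Fin (M + 1) → E → ℝ
  hf_meas : ∀ i, Measurable (f i)
  hf_nonneg : ∀ i x, 0 ≤ f i x
  hf_int : ∀ i, ∫ x, f i x ∂m = 1
  p : ℝ
  hp : p ∈ Set.Ioo (0 : ℝ) 1
  ν : Fin M → ℝ
  hν : ∀ i, 0 < ν i
  hνsum : ∑ i, ν i = 1
  c : ℝ
  hc : 0 < c
  a : Fin (M + 1) → Fin M → ℝ
  ha : ∀ i j, 0 ≤ a i j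
  haii : ∀ i : Fin M, a i.succ i = 0
  hM : 1 ≤ M

namespace DiagSetup

variable {E : Type*} [MeasurableSpace E] {M : ℕ}

/-- `D_i(π, x)`:  `D₀(π,x) = (1-p)π₀f₀(x)` and `D_i(π,x) = (π_i + π₀ p ν_i) f_i(x)`. -/
def D (S : DiagSetup E M) (i : Fin (M + 1)) (π : Fin (M + 1) → ℝ) (x : E) : ℝ :=
  Fin.cases ((1 - S.p) * π 0 * S.f 0 x)
    (fun j => (π j.succ + π 0 * S.p * S.ν j) * S.f j.succ x) i

/-- `D(π, x) = Σ_{i=0}^M D_i(π, x)`. -/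
def Dsum (S : DiagSetup E M) (π : Fin (M + 1) → ℝ) (x : E) : ℝ :=
  ∑ i, S.D i π x

/-- The operator `T`:
`(Tg)(π) = ∫_E D(π,x) g(D₀(π,x)/D(π,x), …, D_M(π,x)/D(π,x)) m(dx)`,
with the integrand interpreted as `0` where `D(π,x) = 0`. -/
def T (S : DiagSetup E M) (g : (Fin (M + 1) → ℝ) → ℝ) (π : Fin (M + 1) → ℝ) : ℝ :=
  ∫ x, (if S.Dsum π x = 0 then 0
        else S.Dsum π x * g fun i => S.D i π x / S.Dsum π x) ∂S.m

/-- `h_j(π) = Σ_{i=0}^M π_i a_{ij}`. -/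
def hj (S : DiagSetup E M) (j : Fin M) (π : Fin (M + 1) → ℝ) : ℝ :=
  ∑ i : Fin (M + 1), π i * S.a i j

/-- `h(π) = min_{j∈{1,…,M}} h_j(π)`. -/
def hmin (S : DiagSetup E M) (π : Fin (M + 1) → ℝ) : ℝ :=
  ⨅ j : Fin M, S.hj j π

/-- The dynamic-programming operator `(𝕄g)(π) = min{h(π), c(1-π₀) + (Tg)(π)}`. -/
def Mop (S : DiagSetup E M) (g : (Fin (M + 1) → ℝ) → ℝ) (π : Fin (M + 1) → ℝ) : ℝ :=
  min (S.hmin π) (S.c * (1 - π 0) + S.T g π)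

/-- `V^N = 𝕄^N h`, the value functions of the truncated problems. -/
def V (S : DiagSetup E M) (N : ℕ) : (Fin (M + 1) → ℝ) → ℝ :=
  S.Mop^[N] S.hmin

end DiagSetup

namespace DiagSetup

variable {E : Type*} [MeasurableSpace E] {M : ℕ} (S : DiagSetup E M)

lemma D_nonneg {π : Fin (M + 1) → ℝ} (hπ : π ∈ stdSimplex ℝ (Fin (M + 1)))
    (i : Fin (M + 1)) (x : E) : 0 ≤ S.D i π x := by
  induction i using Fin.cases with
  | zero =>
    simp only [D, Fin.cases_zero]
    exact mul_nonneg (mul_nonneg (by linarith [S.hp.2]) (hπ.1 0)) (S.hf_nonneg 0 x)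
  | succ j =>
    simp only [D, Fin.cases_succ]
    exact mul_nonneg (add_nonneg (hπ.1 j.succ)
      (mul_nonneg (mul_nonneg (hπ.1 0) S.hp.1.le) (S.hν j).le)) (S.hf_nonneg j.succ x)

lemma Dsum_nonneg {π : Fin (M + 1) → ℝ} (hπ : π ∈ stdSimplex ℝ (Fin (M + 1))) (x : E) :
    0 ≤ S.Dsum π x :=
  Finset.sum_nonneg fun i _ => S.D_nonneg hπ i x

lemma D_comb (a b : ℝ) (π q : Fin (M + 1) → ℝ) (i : Fin (M + 1)) (x : E) :
    S.D i (a • π + b • q) x = a * S.D i π x + b * S.D i q x := by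
  induction i using Fin.cases with
  | zero =>
    simp only [D, Fin.cases_zero, Pi.add_apply, Pi.smul_apply, smul_eq_mul]; ring
  | succ j =>
    simp only [D, Fin.cases_succ, Pi.add_apply, Pi.smul_apply, smul_eq_mul]; ring

lemma Dsum_comb (a b : ℝ) (π q : Fin (M + 1) → ℝ) (x : E) :
    S.Dsum (a • π + b • q) x = a * S.Dsum π x + b * S.Dsum q x := by
  simp only [Dsum, D_comb, Finset.sum_add_distrib, Finset.mul_sum]

lemma ratio_mem {π : Fin (M + 1) → ℝ} (hπ : π ∈ stdSimplex ℝ (Fin (M + 1))) {x : E}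
    (hx : S.Dsum π x ≠ 0) :
    (fun i => S.D i π x / S.Dsum π x) ∈ stdSimplex ℝ (Fin (M + 1)) := by
  have hpos : 0 < S.Dsum π x := lt_of_le_of_ne (S.Dsum_nonneg hπ x) (Ne.symm hx)
  refine ⟨fun i => div_nonneg (S.D_nonneg hπ i x) hpos.le, ?_⟩
  rw [← Finset.sum_div]
  exact div_self hx

lemma measurable_D (i : Fin (M + 1)) :
    Measurable fun z : (Fin (M + 1) → ℝ) × E => S.D i z.1 z.2 := by
  induction i using Fin.cases with
  | zero =>
    simp only [D, Fin.cases_zero]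
    exact ((((measurable_pi_apply 0).comp measurable_fst)).const_mul _).mul
      ((S.hf_meas 0).comp measurable_snd)
  | succ j =>
    simp only [D, Fin.cases_succ]
    exact (((measurable_pi_apply j.succ).comp measurable_fst).add
      (by fun_prop : Measurable fun z : (Fin (M + 1) → ℝ) × E => z.1 0 * S.p * S.ν j)).mul
      ((S.hf_meas j.succ).comp measurable_snd)

lemma measurable_Dsum : Measurable fun z : (Fin (M + 1) → ℝ) × E => S.Dsum z.1 z.2 := by
  simp only [Dsum]
  exact Finset.measurable_sum _ fun i _ => S.measurable_D i

lemma measurable_integrand {g : (Fin (M + 1) → ℝ) → ℝ} (hg : Measurable g) :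
    Measurable fun z : (Fin (M + 1) → ℝ) × E =>
      (if S.Dsum z.1 z.2 = 0 then (0 : ℝ)
       else S.Dsum z.1 z.2 * g fun i => S.D i z.1 z.2 / S.Dsum z.1 z.2) := by
  refine Measurable.ite (S.measurable_Dsum (measurableSet_singleton 0)) measurable_const
    (S.measurable_Dsum.mul (hg.comp (measurable_pi_lambda _ fun i =>
      (S.measurable_D i).div S.measurable_Dsum)))

lemma measurable_T {g : (Fin (M + 1) → ℝ) → ℝ} (hg : Measurable g) : Measurable (S.T g) := by
  haveI := S.hm
  exact ((S.measurable_integrand hg).stronglyMeasurable.integral_prod_right').measurable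

lemma integrable_f (i : Fin (M + 1)) : Integrable (S.f i) S.m := by
  by_contra h
  have := S.hf_int i
  rw [integral_undef h] at this
  norm_num at this

lemma integrable_D (i : Fin (M + 1)) (π : Fin (M + 1) → ℝ) :
    Integrable (fun x => S.D i π x) S.m := by
  induction i using Fin.cases with
  | zero =>
    simp only [D, Fin.cases_zero]
    exact (S.integrable_f 0).const_mul _
  | succ j =>
    simp only [D, Fin.cases_succ]
    exact (S.integrable_f j.succ).const_mul _

lemma integrable_Dsum (π : Fin (M + 1) → ℝ) : Integrable (fun x => S.Dsum π x) S.m := by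
  simp only [Dsum]
  exact integrable_finset_sum _ fun i _ => S.integrable_D i π

lemma integrable_integrand {g : (Fin (M + 1) → ℝ) → ℝ} {B : ℝ} (hg : Measurable g)
    (hB : ∀ π ∈ stdSimplex ℝ (Fin (M + 1)), |g π| ≤ B)
    {π : Fin (M + 1) → ℝ} (hπ : π ∈ stdSimplex ℝ (Fin (M + 1))) :
    Integrable (fun x =>
      if S.Dsum π x = 0 then (0 : ℝ)
      else S.Dsum π x * g fun i => S.D i π x / S.Dsum π x) S.m := by
  have hmeas : Measurable fun x =>
      if S.Dsum π x = 0 then (0 : ℝ)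
      else S.Dsum π x * g fun i => S.D i π x / S.Dsum π x :=
    (S.measurable_integrand hg).comp measurable_prodMk_left
  refine ((S.integrable_Dsum π).const_mul B).mono hmeas.aestronglyMeasurable
    (ae_of_all _ fun x => ?_)
  by_cases hx : S.Dsum π x = 0
  · simp [hx]
  · rw [if_neg hx]
    have hu := S.ratio_mem hπ hx
    have hgu := hB _ hu
    have hBnn : 0 ≤ B := le_trans (abs_nonneg _) hgu
    have h1 : 0 ≤ S.Dsum π x := S.Dsum_nonneg hπ x
    simp only [Real.norm_eq_abs, abs_mul, abs_of_nonneg h1, abs_of_nonneg hBnn]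
    rw [mul_comm B]
    exact mul_le_mul_of_nonneg_left hgu h1

lemma integrand_nonneg {g : (Fin (M + 1) → ℝ) → ℝ}
    (hg0 : ∀ π ∈ stdSimplex ℝ (Fin (M + 1)), 0 ≤ g π)
    {π : Fin (M + 1) → ℝ} (hπ : π ∈ stdSimplex ℝ (Fin (M + 1))) (x : E) :
    0 ≤ if S.Dsum π x = 0 then (0 : ℝ)
        else S.Dsum π x * g fun i => S.D i π x / S.Dsum π x := by
  by_cases hx : S.Dsum π x = 0
  · simp [hx]
  · rw [if_neg hx]
    exact mul_nonneg (S.Dsum_nonneg hπ x) (hg0 _ (S.ratio_mem hπ hx))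

lemma integrand_concave {g : (Fin (M + 1) → ℝ) → ℝ}
    (hg : ConcaveOn ℝ (stdSimplex ℝ (Fin (M + 1))) g)
    {π q : Fin (M + 1) → ℝ} (hπ : π ∈ stdSimplex ℝ (Fin (M + 1)))
    (hq : q ∈ stdSimplex ℝ (Fin (M + 1))) {a b : ℝ}
    (ha : 0 ≤ a) (hb : 0 ≤ b) (hab : a + b = 1) (x : E) :
    a * (if S.Dsum π x = 0 then (0 : ℝ)
          else S.Dsum π x * g fun i => S.D i π x / S.Dsum π x)
      + b * (if S.Dsum q x = 0 then (0 : ℝ)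
          else S.Dsum q x * g fun i => S.D i q x / S.Dsum q x)
      ≤ if S.Dsum (a • π + b • q) x = 0 then (0 : ℝ)
          else S.Dsum (a • π + b • q) x *
            g fun i => S.D i (a • π + b • q) x / S.Dsum (a • π + b • q) x := by
  have hA0 : 0 ≤ S.Dsum π x := S.Dsum_nonneg hπ x
  have hB0 : 0 ≤ S.Dsum q x := S.Dsum_nonneg hq x
  have hcomb : S.Dsum (a • π + b • q) x = a * S.Dsum π x + b * S.Dsum q x := S.Dsum_comb a b π q x
  by_cases hz : a * S.Dsum π x + b * S.Dsum q x = 0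
  · have hz' : S.Dsum (a • π + b • q) x = 0 := by rw [hcomb]; exact hz
    rw [if_pos hz']
    have haA : a * S.Dsum π x = 0 := by nlinarith [mul_nonneg ha hA0, mul_nonneg hb hB0]
    have hbB : b * S.Dsum q x = 0 := by nlinarith [mul_nonneg ha hA0, mul_nonneg hb hB0]
    have h1 : a * (if S.Dsum π x = 0 then (0 : ℝ)
        else S.Dsum π x * g fun i => S.D i π x / S.Dsum π x) = 0 := by
      rcases mul_eq_zero.1 haA with h | h
      · simp [h]
      · simp [h]
    have h2 : b * (if S.Dsum q x = 0 then (0 : ℝ)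
        else S.Dsum q x * g fun i => S.D i q x / S.Dsum q x) = 0 := by
      rcases mul_eq_zero.1 hbB with h | h
      · simp [h]
      · simp [h]
    rw [h1, h2]; norm_num
  · have hpos : 0 < a * S.Dsum π x + b * S.Dsum q x :=
      lt_of_le_of_ne (by positivity) (Ne.symm hz)
    have hz' : ¬ S.Dsum (a • π + b • q) x = 0 := by rw [hcomb]; exact hz
    rw [if_neg hz']
    simp only [hcomb, D_comb]
    by_cases hAz : S.Dsum π x = 0
    · have hD0 : ∀ i, S.D i π x = 0 := by
        intro i
        have h := (Finset.sum_eq_zero_iff_of_nonneg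
          (fun i _ => S.D_nonneg hπ i x)).1 hAz
        exact h i (Finset.mem_univ i)
      have hbB : b * S.Dsum q x ≠ 0 := by
        intro h; apply hz; rw [hAz, h]; ring
      have hb0 : b ≠ 0 := fun h => hbB (by rw [h]; ring)
      have hBxz : S.Dsum q x ≠ 0 := fun h => hbB (by rw [h]; ring)
      have hu : (fun i => (a * S.D i π x + b * S.D i q x) /
          (a * S.Dsum π x + b * S.Dsum q x)) = fun i => S.D i q x / S.Dsum q x := by
        funext i
        rw [hD0 i, hAz]
        simp only [mul_zero, zero_add, add_zero]
        rw [mul_div_mul_left _ _ hb0]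
      rw [hu, if_pos hAz, if_neg hBxz, hAz]
      apply le_of_eq; ring
    · by_cases hBz : S.Dsum q x = 0
      · have hD0 : ∀ i, S.D i q x = 0 := by
          intro i
          have h := (Finset.sum_eq_zero_iff_of_nonneg
            (fun i _ => S.D_nonneg hq i x)).1 hBz
          exact h i (Finset.mem_univ i)
        have haA : a * S.Dsum π x ≠ 0 := by
          intro h; apply hz; rw [hBz, h]; ring
        have ha0 : a ≠ 0 := fun h => haA (by rw [h]; ring)
        have hu : (fun i => (a * S.D i π x + b * S.D i q x) /
            (a * S.Dsum π x + b * S.Dsum q x)) = fun i => S.D i π x / S.Dsum π x := by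
          funext i
          rw [hD0 i, hBz]
          simp only [mul_zero, zero_add, add_zero]
          rw [mul_div_mul_left _ _ ha0]
        rw [hu, if_pos hBz, if_neg hAz, hBz]
        apply le_of_eq; ring
      · have hApos : 0 < S.Dsum π x := lt_of_le_of_ne hA0 (Ne.symm hAz)
        have hBpos : 0 < S.Dsum q x := lt_of_le_of_ne hB0 (Ne.symm hBz)
        have hv := S.ratio_mem hπ hAz
        have hw := S.ratio_mem hq hBz
        have hlam : (0:ℝ) ≤ a * S.Dsum π x / (a * S.Dsum π x + b * S.Dsum q x) := by positivity
        have hmu : (0:ℝ) ≤ b * S.Dsum q x / (a * S.Dsum π x + b * S.Dsum q x) := by positivity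
        have hlm : a * S.Dsum π x / (a * S.Dsum π x + b * S.Dsum q x)
            + b * S.Dsum q x / (a * S.Dsum π x + b * S.Dsum q x) = 1 := by
          rw [← add_div]; exact div_self hz
        have hcc := hg.2 hv hw hlam hmu hlm
        have hu : ((a * S.Dsum π x / (a * S.Dsum π x + b * S.Dsum q x)) •
              (fun i => S.D i π x / S.Dsum π x)
            + (b * S.Dsum q x / (a * S.Dsum π x + b * S.Dsum q x)) •
              (fun i => S.D i q x / S.Dsum q x))
            = fun i => (a * S.D i π x + b * S.D i q x) /
                (a * S.Dsum π x + b * S.Dsum q x) := by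
          funext i
          simp only [Pi.add_apply, Pi.smul_apply, smul_eq_mul]
          field_simp
        rw [hu] at hcc
        simp only [smul_eq_mul] at hcc
        rw [if_neg hAz, if_neg hBz]
        have hfin := mul_le_mul_of_nonneg_left hcc hpos.le
        calc a * (S.Dsum π x * g fun i => S.D i π x / S.Dsum π x)
            + b * (S.Dsum q x * g fun i => S.D i q x / S.Dsum q x)
            = (a * S.Dsum π x + b * S.Dsum q x) *
              (a * S.Dsum π x / (a * S.Dsum π x + b * S.Dsum q x) *
                (g fun i => S.D i π x / S.Dsum π x)
              + b * S.Dsum q x / (a * S.Dsum π x + b * S.Dsum q x) *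
                (g fun i => S.D i q x / S.Dsum q x)) := by
              field_simp
          _ ≤ (a * S.Dsum π x + b * S.Dsum q x) *
              g fun i => (a * S.D i π x + b * S.D i q x) /
                (a * S.Dsum π x + b * S.Dsum q x) := hfin

lemma concaveOn_T {g : (Fin (M + 1) → ℝ) → ℝ} {B : ℝ} (hg : Measurable g)
    (hgc : ConcaveOn ℝ (stdSimplex ℝ (Fin (M + 1))) g)
    (hB : ∀ π ∈ stdSimplex ℝ (Fin (M + 1)), |g π| ≤ B) :
    ConcaveOn ℝ (stdSimplex ℝ (Fin (M + 1))) (S.T g) := by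
  refine ⟨convex_stdSimplex ℝ _, fun π hπ q hq a b ha hb hab => ?_⟩
  have hmem : a • π + b • q ∈ stdSimplex ℝ (Fin (M + 1)) :=
    (convex_stdSimplex ℝ _) hπ hq ha hb hab
  have hIπ := S.integrable_integrand hg hB hπ
  have hIq := S.integrable_integrand hg hB hq
  have hIc := S.integrable_integrand hg hB hmem
  simp only [T, smul_eq_mul]
  rw [← integral_const_mul, ← integral_const_mul,
    ← integral_add (hIπ.const_mul a) (hIq.const_mul b)]
  exact integral_mono ((hIπ.const_mul a).add (hIq.const_mul b)) hIc
    (fun x => S.integrand_concave hgc hπ hq ha hb hab x)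

lemma hj_comb (j : Fin M) (a b : ℝ) (π q : Fin (M + 1) → ℝ) :
    S.hj j (a • π + b • q) = a * S.hj j π + b * S.hj j q := by
  simp only [hj, Pi.add_apply, Pi.smul_apply, smul_eq_mul, Finset.mul_sum,
    ← Finset.sum_add_distrib]
  exact Finset.sum_congr rfl fun i _ => by ring

lemma measurable_hj (j : Fin M) : Measurable (S.hj j) :=
  Finset.measurable_sum _ fun i _ => (measurable_pi_apply i).mul_const _

lemma hmin_le (j : Fin M) (π : Fin (M + 1) → ℝ) : S.hmin π ≤ S.hj j π :=
  ciInf_le (Set.finite_range _).bddBelow j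

lemma le_hmin {t : ℝ} {π : Fin (M + 1) → ℝ} (h : ∀ j, t ≤ S.hj j π) : t ≤ S.hmin π := by
  haveI : Nonempty (Fin M) := ⟨⟨0, S.hM⟩⟩
  exact le_ciInf h

lemma hmin_nonneg {π : Fin (M + 1) → ℝ} (hπ : π ∈ stdSimplex ℝ (Fin (M + 1))) :
    0 ≤ S.hmin π :=
  S.le_hmin fun j => Finset.sum_nonneg fun i _ => mul_nonneg (hπ.1 i) (S.ha i j)

/-- A crude uniform bound for all the value functions. -/
def bnd : ℝ := ∑ i : Fin (M + 1), ∑ j : Fin M, S.a i j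

lemma bnd_nonneg : 0 ≤ S.bnd :=
  Finset.sum_nonneg fun i _ => Finset.sum_nonneg fun j _ => S.ha i j

lemma pi_le_one {π : Fin (M + 1) → ℝ} (hπ : π ∈ stdSimplex ℝ (Fin (M + 1)))
    (i : Fin (M + 1)) : π i ≤ 1 := by
  have := Finset.single_le_sum (f := π) (fun i _ => hπ.1 i) (Finset.mem_univ i)
  rwa [hπ.2] at this

lemma hmin_le_bnd {π : Fin (M + 1) → ℝ} (hπ : π ∈ stdSimplex ℝ (Fin (M + 1))) :
    S.hmin π ≤ S.bnd := by
  calc S.hmin π ≤ S.hj ⟨0, S.hM⟩ π := S.hmin_le ⟨0, S.hM⟩ π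
    _ ≤ ∑ i : Fin (M + 1), S.a i ⟨0, S.hM⟩ := Finset.sum_le_sum fun i _ =>
        mul_le_of_le_one_left (S.ha i ⟨0, S.hM⟩) (pi_le_one hπ i)
    _ ≤ S.bnd := Finset.sum_le_sum fun i _ =>
        Finset.single_le_sum (fun j _ => S.ha i j) (Finset.mem_univ (⟨0, S.hM⟩ : Fin M))

lemma measurable_hmin : Measurable S.hmin := by
  haveI : Nonempty (Fin M) := ⟨⟨0, S.hM⟩⟩
  exact Measurable.iInf fun j => S.measurable_hj j

lemma concaveOn_hmin : ConcaveOn ℝ (stdSimplex ℝ (Fin (M + 1))) S.hmin := by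
  refine ⟨convex_stdSimplex ℝ _, fun π hπ q hq a b ha hb hab => ?_⟩
  simp only [smul_eq_mul]
  refine S.le_hmin fun j => ?_
  rw [hj_comb]
  exact add_le_add (mul_le_mul_of_nonneg_left (S.hmin_le j π) ha)
    (mul_le_mul_of_nonneg_left (S.hmin_le j q) hb)

lemma concaveOn_min_aux {X : Type*} [AddCommMonoid X] [Module ℝ X] {s : Set X}
    {f g : X → ℝ} (hf : ConcaveOn ℝ s f) (hg : ConcaveOn ℝ s g) :
    ConcaveOn ℝ s fun x => min (f x) (g x) := by
  refine ⟨hf.1, fun x hx y hy a b ha hb hab => ?_⟩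
  simp only [smul_eq_mul]
  refine le_min ?_ ?_
  · refine le_trans (add_le_add (mul_le_mul_of_nonneg_left (min_le_left _ _) ha)
      (mul_le_mul_of_nonneg_left (min_le_left _ _) hb)) ?_
    have := hf.2 hx hy ha hb hab
    simpa only [smul_eq_mul] using this
  · refine le_trans (add_le_add (mul_le_mul_of_nonneg_left (min_le_right _ _) ha)
      (mul_le_mul_of_nonneg_left (min_le_right _ _) hb)) ?_
    have := hg.2 hx hy ha hb hab
    simpa only [smul_eq_mul] using this

lemma concaveOn_affine : ConcaveOn ℝ (stdSimplex ℝ (Fin (M + 1)))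
    fun π : Fin (M + 1) → ℝ => S.c * (1 - π 0) := by
  refine ⟨convex_stdSimplex ℝ _, fun π hπ q hq a b ha hb hab => ?_⟩
  simp only [Pi.add_apply, Pi.smul_apply, smul_eq_mul]
  apply le_of_eq
  linear_combination S.c * hab

lemma V_good (N : ℕ) : Measurable (S.V N) ∧
    ConcaveOn ℝ (stdSimplex ℝ (Fin (M + 1))) (S.V N) ∧
    ∀ π ∈ stdSimplex ℝ (Fin (M + 1)), 0 ≤ S.V N π ∧ S.V N π ≤ S.bnd := by
  induction N with
  | zero =>
    refine ⟨S.measurable_hmin, S.concaveOn_hmin, fun π hπ => ⟨S.hmin_nonneg hπ, S.hmin_le_bnd hπ⟩⟩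
  | succ N ih =>
    obtain ⟨hme, hcc, hbd⟩ := ih
    have hV : S.V (N + 1) = S.Mop (S.V N) := Function.iterate_succ_apply' S.Mop N S.hmin
    have habs : ∀ π ∈ stdSimplex ℝ (Fin (M + 1)), |S.V N π| ≤ S.bnd := fun π hπ =>
      abs_le.2 ⟨by linarith [(hbd π hπ).1, S.bnd_nonneg], (hbd π hπ).2⟩
    have hTm := S.measurable_T hme
    have hTc := S.concaveOn_T hme hcc habs
    rw [hV]
    refine ⟨?_, ?_, ?_⟩
    · exact Measurable.min S.measurable_hmin
        (((measurable_const.sub (measurable_pi_apply 0)).const_mul S.c).add hTm)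
    · exact concaveOn_min_aux S.concaveOn_hmin (S.concaveOn_affine.add hTc)
    · intro π hπ
      constructor
      · refine le_min (S.hmin_nonneg hπ) (add_nonneg ?_ ?_)
        · exact mul_nonneg S.hc.le (by linarith [pi_le_one hπ 0])
        · exact integral_nonneg fun x => S.integrand_nonneg (fun ρ hρ => (hbd ρ hρ).1) hπ x
      · exact le_trans (min_le_left _ _) (S.hmin_le_bnd hπ)

end DiagSetup

/-- every truncated value function `V^N = 𝕄^N h` is concave on the
simplex, and so is the pointwise limit `V₀ = lim_N 𝕄^N h`. -/
theorem value_functions_concave {E : Type*} [MeasurableSpace E] {M : ℕ}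
    (S : DiagSetup E M) (V0 : (Fin (M + 1) → ℝ) → ℝ)
    (hV0 : ∀ π ∈ stdSimplex ℝ (Fin (M + 1)),
      Tendsto (fun N => S.V N π) atTop (nhds (V0 π))) :
    (∀ N : ℕ, ConcaveOn ℝ (stdSimplex ℝ (Fin (M + 1))) (S.V N)) ∧
    ConcaveOn ℝ (stdSimplex ℝ (Fin (M + 1))) V0 := by
  constructor
  · intro N
    exact (S.V_good N).2.1
  · refine ⟨convex_stdSimplex ℝ _, fun π hπ q hq a b ha hb hab => ?_⟩
    have hmem : a • π + b • q ∈ stdSimplex ℝ (Fin (M + 1)) :=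
      (convex_stdSimplex ℝ _) hπ hq ha hb hab
    have h1 := hV0 π hπ
    have h2 := hV0 q hq
    have h3 := hV0 _ hmem
    simp only [smul_eq_mul]
    refine le_of_tendsto_of_tendsto' ((h1.const_mul a).add (h2.const_mul b)) h3 fun N => ?_
    have := ((S.V_good N).2.1).2 hπ hq ha hb hab
    simpa only [smul_eq_mul] using this
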